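/- arXiv:1310.0254 — 3 statements merged into one kernel-verified Lean document; each statement's English description precedes it below -/
import Mathlib

section
/- Let H be a real separable Hilbert space decomposed as the orthogonal direct sum of closed subspaces (H_k)_{k≥0}. Then the symmetric tensor power H^{⊙n} is the orthogonal direct sum, over all sequences α = (α_0, α_1, ...) of nonnegative integers with finite sum |α| = n, of the subspaces H_0^{⊙α_0} ⊙ H_1^{⊙α_1} ⊙ H_2^{⊙α_2} ⊙ ··· . -/
open scoped RealInnerProductSpace BigOperators
open Finset

section Aux
variable {H T : Type*} [NormedAddCommGroup H] [InnerProductSpace ℝ H]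
    [NormedAddCommGroup T] [InnerProductSpace ℝ T]
    {n : ℕ} {tp : (Fin n → H) → T}
    (htp : ∀ f g : Fin n → H, ⟪tp f, tp g⟫ = ∏ i, ⟪f i, g i⟫)

omit htp in
lemma aux_prod_update (f : Fin n → H) (i : Fin n) (x y : H) :
    (∏ j, ⟪Function.update f i x j, Function.update f i y j⟫)
      = ⟪x, y⟫ * ∏ j ∈ univ.erase i, ⟪f j, f j⟫ := by
  rw [← Finset.mul_prod_erase _ _ (mem_univ i)]
  simp only [Function.update_self]
  congr 1
  refine Finset.prod_congr rfl fun j hj => ?_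
  rw [Function.update_of_ne (Finset.ne_of_mem_erase hj),
    Function.update_of_ne (Finset.ne_of_mem_erase hj)]

include htp

lemma aux_tp_add (f : Fin n → H) (i : Fin n) (x y : H) :
    tp (Function.update f i (x + y))
      = tp (Function.update f i x) + tp (Function.update f i y) := by
  have h0 : ⟪tp (Function.update f i (x+y)) - (tp (Function.update f i x) + tp (Function.update f i y)),
      tp (Function.update f i (x+y)) - (tp (Function.update f i x) + tp (Function.update f i y))⟫ = 0 := by
    simp only [inner_sub_left, inner_sub_right, inner_add_left, inner_add_right, htp,
      aux_prod_update]
    ring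
  rw [inner_self_eq_zero, sub_eq_zero] at h0
  exact h0

lemma aux_tp_smul (f : Fin n → H) (i : Fin n) (r : ℝ) (x : H) :
    tp (Function.update f i (r • x)) = r • tp (Function.update f i x) := by
  have h0 : ⟪tp (Function.update f i (r • x)) - r • tp (Function.update f i x),
      tp (Function.update f i (r • x)) - r • tp (Function.update f i x)⟫ = 0 := by
    simp only [inner_sub_left, inner_sub_right, real_inner_smul_left, real_inner_smul_right, htp,
      aux_prod_update]
    ring
  rw [inner_self_eq_zero, sub_eq_zero] at h0
  exact h0

lemma aux_tp_norm (f : Fin n → H) : ‖tp f‖ = ∏ i, ‖f i‖ := by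
  have h1 : ‖tp f‖ ^ 2 = (∏ i, ‖f i‖) ^ 2 := by
    rw [← real_inner_self_eq_norm_sq, htp, ← Finset.prod_pow]
    exact Finset.prod_congr rfl fun i _ => real_inner_self_eq_norm_sq _
  calc ‖tp f‖ = Real.sqrt (‖tp f‖ ^ 2) := (Real.sqrt_sq (norm_nonneg _)).symm
  _ = Real.sqrt ((∏ i, ‖f i‖) ^ 2) := by rw [h1]
  _ = ∏ i, ‖f i‖ := Real.sqrt_sq (Finset.prod_nonneg fun i _ => norm_nonneg _)

/-- `tp` as a multilinear map. -/
noncomputable def auxML : MultilinearMap ℝ (fun _ : Fin n => H) T where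
  toFun := tp
  map_update_add' := by
    intro dec f i x y
    rw [Subsingleton.elim dec (instDecidableEqFin n)]
    exact aux_tp_add htp f i x y
  map_update_smul' := by
    intro dec f i r x
    rw [Subsingleton.elim dec (instDecidableEqFin n)]
    exact aux_tp_smul htp f i r x

lemma aux_tp_cont : Continuous tp := by
  have := ((auxML htp).mkContinuous 1 (fun m => by
    rw [one_mul]; exact le_of_eq (aux_tp_norm htp m))).cont
  exact this

end Aux

lemma card_filter_comp_perm {n : ℕ} (c : Fin n → ℕ) (σ : Equiv.Perm (Fin n)) (j : ℕ) :
    ((univ : Finset (Fin n)).filter fun i => c (σ i) = j).card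
      = (univ.filter fun i => c i = j).card := by
  apply Finset.card_bij' (fun i _ => σ i) (fun i _ => σ.symm i) <;> simp

/-- `H^{⊙n}` is the orthogonal direct sum, over multi-indices `α` with
`|α| = n`, of the subspaces `H_0^{⊙α_0} ⊙ H_1^{⊙α_1} ⊙ ⋯`. The subspace attached to `α`
is the closure of the span of symmetrized elementary tensors whose factors lie in the
`H_k`'s with multiplicities given by `α`. -/
theorem statement3
    {H T : Type*} [NormedAddCommGroup H] [InnerProductSpace ℝ H]
    [CompleteSpace H] [TopologicalSpace.SeparableSpace H]
    [NormedAddCommGroup T] [InnerProductSpace ℝ T] [CompleteSpace T]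
    (Hk : ℕ → Submodule ℝ H)
    (hclosed : ∀ j, IsClosed (Hk j : Set H))
    (horth : ∀ j j', j ≠ j' → ∀ x ∈ Hk j, ∀ y ∈ Hk j', ⟪x, y⟫ = 0)
    (htotal : (⨆ j, Hk j).topologicalClosure = ⊤)
    (n : ℕ)
    (tp : (Fin n → H) → T)
    (htp : ∀ f g : Fin n → H, ⟪tp f, tp g⟫ = ∏ i, ⟪f i, g i⟫)
    (htptotal : (Submodule.span ℝ (Set.range tp)).topologicalClosure = ⊤)
    (Sym : T →L[ℝ] T)
    (hSym : ∀ f : Fin n → H,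
      Sym (tp f) = ((n.factorial : ℝ))⁻¹ • ∑ σ : Equiv.Perm (Fin n), tp (fun i => f (σ i)))
    (Sub : (ℕ →₀ ℕ) → Submodule ℝ T)
    (hSub : ∀ α : ℕ →₀ ℕ, Sub α
      = (Submodule.span ℝ (Sym '' {t | ∃ c : Fin n → ℕ, ∃ f : Fin n → H,
          (∀ j, (Finset.univ.filter fun i => c i = j).card = α j)
            ∧ (∀ i, f i ∈ Hk (c i)) ∧ t = tp f})).topologicalClosure) :
    (∀ α β : ℕ →₀ ℕ, (α.sum fun _ m => m) = n → (β.sum fun _ m => m) = n → α ≠ β →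
        ∀ u ∈ Sub α, ∀ v ∈ Sub β, ⟪u, v⟫ = 0)
      ∧ (⨆ α ∈ {α : ℕ →₀ ℕ | (α.sum fun _ m => m) = n}, Sub α).topologicalClosure
          = (LinearMap.range Sym.toLinearMap).topologicalClosure := by
  classical
  -- orthogonality of elementary tensors with different count vectors
  have key : ∀ (c d : Fin n → ℕ) (f g : Fin n → H),
      (∀ i, f i ∈ Hk (c i)) → (∀ i, g i ∈ Hk (d i)) →
      (∃ j, ((univ.filter fun i => c i = j).card : ℕ) ≠ (univ.filter fun i => d i = j).card) →
      (∏ i, ⟪f i, g i⟫) = 0 := by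
    intro c d f g hf hg hj
    by_contra h
    have hcd : ∀ i, c i = d i := by
      intro i
      by_contra hne
      exact (Finset.prod_ne_zero_iff.mp h i (mem_univ i)) (horth _ _ hne _ (hf i) _ (hg i))
    obtain ⟨j, hj⟩ := hj
    exact hj (by rw [Finset.filter_congr fun i _ => by rw [hcd i]])
  have symkey : ∀ (c d : Fin n → ℕ) (f g : Fin n → H),
      (∀ i, f i ∈ Hk (c i)) → (∀ i, g i ∈ Hk (d i)) →
      (∃ j, ((univ.filter fun i => c i = j).card : ℕ) ≠ (univ.filter fun i => d i = j).card) →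
      ⟪Sym (tp f), Sym (tp g)⟫ = 0 := by
    intro c d f g hf hg hj
    have hz : ∀ σ τ : Equiv.Perm (Fin n), (∏ i, ⟪f (σ i), g (τ i)⟫) = 0 := by
      intro σ τ
      refine key (fun i => c (σ i)) (fun i => d (τ i)) _ _
        (fun i => hf (σ i)) (fun i => hg (τ i)) ?_
      obtain ⟨j, hj⟩ := hj
      exact ⟨j, by rw [card_filter_comp_perm c σ j, card_filter_comp_perm d τ j]; exact hj⟩
    have hsum : ⟪∑ σ : Equiv.Perm (Fin n), tp fun i => f (σ i),
        ∑ τ : Equiv.Perm (Fin n), tp fun i => g (τ i)⟫ = (0:ℝ) := by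
      rw [sum_inner]
      refine Finset.sum_eq_zero fun σ _ => ?_
      rw [inner_sum]
      refine Finset.sum_eq_zero fun τ _ => ?_
      rw [htp]; exact hz σ τ
    rw [hSym f, hSym g, real_inner_smul_left, real_inner_smul_right, hsum, mul_zero, mul_zero]
  -- Part 1
  have main_le : ∀ α β : ℕ →₀ ℕ, α ≠ β → Sub α ≤ (Sub β)ᗮ := by
    intro α β hab
    rw [hSub α]
    refine Submodule.topologicalClosure_minimal _ ?_ (Submodule.isClosed_orthogonal _)
    rw [Submodule.span_le]
    rintro x ⟨t, ⟨c, f, hcount, hf, rfl⟩, rfl⟩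
    rw [SetLike.mem_coe, Submodule.mem_orthogonal']
    intro u hu
    have hle : Sub β ≤ LinearMap.ker (innerSL ℝ (Sym (tp f)) : T →ₗ[ℝ] ℝ) := by
      rw [hSub β]
      refine Submodule.topologicalClosure_minimal _ ?_ (ContinuousLinearMap.isClosed_ker _)
      rw [Submodule.span_le]
      rintro y ⟨s, ⟨d, g, hdcount, hg, rfl⟩, rfl⟩
      rw [SetLike.mem_coe, LinearMap.mem_ker]
      show ⟪Sym (tp f), Sym (tp g)⟫ = 0
      refine symkey c d f g hf hg ?_
      obtain ⟨j, hj⟩ := Finsupp.ne_iff.mp hab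
      exact ⟨j, by rw [hcount j, hdcount j]; exact hj⟩
    exact hle hu
  have part1 : ∀ α β : ℕ →₀ ℕ, α ≠ β → ∀ u ∈ Sub α, ∀ v ∈ Sub β, ⟪u, v⟫ = 0 := by
    intro α β hab u hu v hv
    exact (Submodule.mem_orthogonal' _ _).mp (main_le α β hab hu) v hv
  -- membership of symmetrized elementary tensors in some Sub α
  have memSub : ∀ (c : Fin n → ℕ) (g : Fin n → H), (∀ i, g i ∈ Hk (c i)) →
      ∃ α : ℕ →₀ ℕ, (α.sum fun _ m => m) = n ∧ Sym (tp g) ∈ Sub α := by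
    intro c g hg
    refine ⟨∑ i, Finsupp.single (c i) 1, ?_, ?_⟩
    · rw [← Finsupp.sum_finsetSum_index (fun _ => rfl) (fun _ _ _ => rfl)]
      simp [Finsupp.sum_single_index]
    · rw [hSub]
      apply Submodule.le_topologicalClosure
      apply Submodule.subset_span
      refine ⟨tp g, ⟨c, g, fun j => ?_, hg, rfl⟩, rfl⟩
      rw [Finset.card_filter, Finsupp.finset_sum_apply]
      exact Finset.sum_congr rfl fun i _ => by rw [Finsupp.single_apply]
  -- continuity of tp
  have tp_cont : Continuous tp := aux_tp_cont htp
  -- the orthogonal-density argument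
  have horthSym : ∀ v : T,
      v ∈ (⨆ α ∈ {α : ℕ →₀ ℕ | (α.sum fun _ m => m) = n}, Sub α)ᗮ →
      ∀ s : T, ⟪v, Sym s⟫ = 0 := by
    intro v hv
    have h1 : ∀ (c : Fin n → ℕ) (g : Fin n → H), (∀ i, g i ∈ Hk (c i)) →
        ⟪v, Sym (tp g)⟫ = 0 := by
      intro c g hg
      obtain ⟨α, hαn, hmem⟩ := memSub c g hg
      have hK : Sym (tp g) ∈ ⨆ α ∈ {α : ℕ →₀ ℕ | (α.sum fun _ m => m) = n}, Sub α :=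
        (le_iSup₂ (f := fun α _ => Sub α) α hαn) hmem
      rw [real_inner_comm]
      exact (Submodule.mem_orthogonal _ v).mp hv _ hK
    have h2 : ∀ g : Fin n → H, (∀ i, g i ∈ (⨆ k, Hk k : Submodule ℝ H)) →
        ⟪v, Sym (tp g)⟫ = 0 := by
      intro g hg
      choose x hx hxsum using fun i =>
        (Submodule.mem_iSup_iff_exists_finsupp (fun k => Hk k) (g i)).mp (hg i)
      set L : T →ₗ[ℝ] ℝ := ((innerSL ℝ v).comp Sym).toLinearMap with hL
      have hML : (L.compMultilinearMap (auxML htp)) g = 0 := by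
        have hgeq : g = fun i => ∑ k ∈ (x i).support, x i k := by
          funext i; rw [← hxsum i]; rfl
        rw [hgeq, MultilinearMap.map_sum_finset]
        refine Finset.sum_eq_zero fun r _ => ?_
        exact h1 r (fun i => x i (r i)) (fun i => hx i (r i))
      exact hML
    have hd : Dense (Set.pi Set.univ fun _ : Fin n => ((⨆ k, Hk k : Submodule ℝ H) : Set H)) :=
      dense_pi Set.univ fun _ _ => Submodule.dense_iff_topologicalClosure_eq_top.mpr htotal
    have hcont : Continuous fun g : Fin n → H => ⟪v, Sym (tp g)⟫ :=
      (innerSL ℝ v).continuous.comp (Sym.continuous.comp tp_cont)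
    have heq : (fun g : Fin n → H => ⟪v, Sym (tp g)⟫) = fun _ => (0 : ℝ) :=
      Continuous.ext_on hd hcont continuous_const fun g hg =>
        h2 g fun i => hg i (Set.mem_univ i)
    have h3 : ∀ g : Fin n → H, ⟪v, Sym (tp g)⟫ = 0 := fun g => congrFun heq g
    intro s
    have hker : (⊤ : Submodule ℝ T) ≤ LinearMap.ker (((innerSL ℝ v).comp Sym : T →L[ℝ] ℝ) : T →ₗ[ℝ] ℝ) := by
      rw [← htptotal]
      refine Submodule.topologicalClosure_minimal _ ?_ (ContinuousLinearMap.isClosed_ker _)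
      rw [Submodule.span_le]
      rintro t ⟨g, rfl⟩
      rw [SetLike.mem_coe, LinearMap.mem_ker]
      exact h3 g
    exact hker (Submodule.mem_top (x := s))
  -- Part 2 assembly
  have hKle : (⨆ α ∈ {α : ℕ →₀ ℕ | (α.sum fun _ m => m) = n}, Sub α)
      ≤ (LinearMap.range Sym.toLinearMap).topologicalClosure := by
    refine iSup₂_le fun α _ => ?_
    rw [hSub]
    refine Submodule.topologicalClosure_minimal _ ?_ (Submodule.isClosed_topologicalClosure _)
    rw [Submodule.span_le]
    rintro x ⟨t, _, rfl⟩
    exact Submodule.le_topologicalClosure _ (LinearMap.mem_range_self _ t)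
  have hRleK : LinearMap.range Sym.toLinearMap
      ≤ (⨆ α ∈ {α : ℕ →₀ ℕ | (α.sum fun _ m => m) = n}, Sub α).topologicalClosure := by
    rw [← Submodule.orthogonal_orthogonal_eq_closure]
    rintro x ⟨s, rfl⟩
    rw [Submodule.mem_orthogonal]
    intro u hu
    exact horthSym u hu s
  refine ⟨fun α β _ _ hab => part1 α β hab, le_antisymm ?_ ?_⟩
  · exact Submodule.topologicalClosure_minimal _ hKle (Submodule.isClosed_topologicalClosure _)
  · exact Submodule.topologicalClosure_minimal _ hRleK (Submodule.isClosed_topologicalClosure _)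
end

section
/- Let H be a real separable Hilbert space decomposed as the orthogonal direct sum of closed subspaces (H_k)_{k≥0}, and let α = (α_0, α_1, ...) be a multi-index of nonnegative integers with |α| = n < ∞. Then the restriction of the symmetrization projection Sym_n to the subspace H_0^{⊙α_0} ⊗ H_1^{⊙α_1} ⊗ H_2^{⊙α_2} ⊗ ··· of H^{⊗n}, viewed as a map into H^{⊙n}, is injective with closed image H_0^{⊙α_0} ⊙ H_1^{⊙α_1} ⊙ ···, and scales norms by the constant factor (α_0! α_1! α_2! ··· / n!)^{1/2}; i.e., after rescaling the inner products on domain by α_0!α_1!··· and on codomain by n!, it is a unitary operator. -/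
open scoped RealInnerProductSpace BigOperators
open Finset

/-- for a multi-index `α` with `|α| = n`, the restriction of `Sym_n` to the
subspace `H_0^{⊙α_0} ⊗ H_1^{⊙α_1} ⊗ ⋯` of `H^{⊗n}` (realized as the closed span of the
block-symmetrized elementary tensors with block structure `c`) is injective, scales norms
by the constant `(α_0!α_1!⋯/n!)^{1/2}`, and has (closed) image `H_0^{⊙α_0} ⊙ H_1^{⊙α_1} ⊙ ⋯`. -/
theorem statement4
    {H T : Type*} [NormedAddCommGroup H] [InnerProductSpace ℝ H]
    [CompleteSpace H] [TopologicalSpace.SeparableSpace H]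
    [NormedAddCommGroup T] [InnerProductSpace ℝ T] [CompleteSpace T]
    (Hk : ℕ → Submodule ℝ H)
    (hclosed : ∀ j, IsClosed (Hk j : Set H))
    (horth : ∀ j j', j ≠ j' → ∀ x ∈ Hk j, ∀ y ∈ Hk j', ⟪x, y⟫ = 0)
    (htotal : (⨆ j, Hk j).topologicalClosure = ⊤)
    (n : ℕ)
    (tp : (Fin n → H) → T)
    (htp : ∀ f g : Fin n → H, ⟪tp f, tp g⟫ = ∏ i, ⟪f i, g i⟫)
    (htptotal : (Submodule.span ℝ (Set.range tp)).topologicalClosure = ⊤)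
    (Sym : T →L[ℝ] T)
    (hSym : ∀ f : Fin n → H,
      Sym (tp f) = ((n.factorial : ℝ))⁻¹ • ∑ σ : Equiv.Perm (Fin n), tp (fun i => f (σ i)))
    (α : ℕ →₀ ℕ) (hα : (α.sum fun _ m => m) = n)
    -- a block structure realizing the multiplicities α
    (c : Fin n → ℕ)
    (hc : ∀ j, (Finset.univ.filter fun i => c i = j).card = α j)
    -- the domain: `H_0^{⊙α_0} ⊗ H_1^{⊙α_1} ⊗ ⋯`, spanned by block-symmetrized tensors
    (D : Submodule ℝ T)
    (hD : D = (Submodule.span ℝ {t | ∃ f : Fin n → H, (∀ i, f i ∈ Hk (c i)) ∧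
        t = ((∏ j ∈ α.support, ((α j).factorial : ℝ)))⁻¹ •
          ∑ σ ∈ Finset.univ.filter
              (fun σ : Equiv.Perm (Fin n) => ∀ i, c (σ i) = c i),
            tp (fun i => f (σ i))}).topologicalClosure)
    -- the target: `H_0^{⊙α_0} ⊙ H_1^{⊙α_1} ⊙ ⋯`
    (Tar : Submodule ℝ T)
    (hTar : Tar = (Submodule.span ℝ (Sym ''
        {t | ∃ f : Fin n → H, (∀ i, f i ∈ Hk (c i)) ∧ t = tp f})).topologicalClosure) :
    (∀ u ∈ D, ‖Sym u‖
        = Real.sqrt ((∏ j ∈ α.support, ((α j).factorial : ℝ)) / (n.factorial : ℝ)) * ‖u‖)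
      ∧ Set.InjOn Sym (D : Set T)
      ∧ Sym '' (D : Set T) = (Tar : Set T) := by
  -- Abbreviations
  set P : ℝ := ∏ j ∈ α.support, ((α j).factorial : ℝ) with hPdef
  set N : ℝ := (n.factorial : ℝ) with hNdef
  set G : Finset (Equiv.Perm (Fin n)) :=
    Finset.univ.filter (fun σ : Equiv.Perm (Fin n) => ∀ i, c (σ i) = c i) with hGdef
  have hP0 : 0 < P := Finset.prod_pos fun j _ => by positivity
  have hN0 : 0 < N := by positivity
  -- cardinality of the block stabilizer
  have hGcard : (G.card : ℝ) = P := by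
    have hnat : G.card = ∏ j ∈ α.support, (α j).factorial := by
      have h1 : G.card = Fintype.card {σ : Equiv.Perm (Fin n) // c ∘ σ = c} := by
        rw [Fintype.card_subtype, hGdef]
        congr 1
        apply Finset.filter_congr
        intro σ _
        constructor
        · intro hσ; funext i; exact hσ i
        · intro hσ i; exact congrFun hσ i
      have hfiber : ∀ j, Fintype.card {i : Fin n // c i = j} = α j := by
        intro j; rw [Fintype.card_subtype]; exact hc j
      have himg2 : Finset.univ.image c = α.support := by
        ext j
        simp only [Finset.mem_image, Finset.mem_univ, true_and, Finsupp.mem_support_iff]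
        constructor
        · rintro ⟨i, rfl⟩
          intro h0
          have h2 : i ∈ Finset.univ.filter fun i' : Fin n => c i' = c i := by
            simp
          have h3 := hc (c i)
          rw [h0, Finset.card_eq_zero] at h3
          rw [h3] at h2
          exact absurd h2 (Finset.notMem_empty i)
        · intro hj
          have h3 := hc j
          have h4 : 0 < (Finset.univ.filter fun i : Fin n => c i = j).card := by
            rw [h3]; exact Nat.pos_of_ne_zero hj
          obtain ⟨i, hi⟩ := Finset.card_pos.mp h4
          exact ⟨i, (Finset.mem_filter.mp hi).2⟩
      rw [h1, DomMulAct.stabilizer_card' c, himg2]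
      exact Finset.prod_congr rfl fun j _ => by rw [hfiber]
    rw [hnat, hPdef]
    push_cast
    rfl
  -- membership in G
  have hGmem : ∀ σ : Equiv.Perm (Fin n), σ ∈ G ↔ ∀ i, c (σ i) = c i := by
    intro σ; rw [hGdef, Finset.mem_filter]; simp
  have hGinv : ∀ τ ∈ G, τ⁻¹ ∈ G := by
    intro τ hτ
    rw [hGmem] at hτ ⊢
    intro i
    have h := hτ (τ⁻¹ i)
    rw [show τ (τ⁻¹ i) = i from τ.apply_symm_apply i] at h
    exact h.symm
  have hGmul : ∀ σ ∈ G, ∀ τ ∈ G, σ * τ ∈ G := by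
    intro σ hσ τ hτ
    rw [hGmem] at hσ hτ ⊢
    intro i
    rw [Equiv.Perm.mul_apply, hσ, hτ]
  -- elementary inner product of sums of elementary tensors
  have inner_sum_sum : ∀ (f h : Fin n → H) (s t : Finset (Equiv.Perm (Fin n))),
      ⟪∑ σ ∈ s, tp (fun i => f (σ i)), ∑ τ ∈ t, tp (fun i => h (τ i))⟫
        = ∑ σ ∈ s, ∑ τ ∈ t, ∏ i, ⟪f (σ i), h (τ i)⟫ := by
    intro f h s t
    rw [sum_inner]
    refine Finset.sum_congr rfl fun σ _ => ?_
    rw [inner_sum]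
    exact Finset.sum_congr rfl fun τ _ => htp _ _
  have prod_reindex : ∀ (f h : Fin n → H) (σ τ : Equiv.Perm (Fin n)),
      (∏ i, ⟪f (σ i), h (τ i)⟫) = ∏ i, ⟪f ((σ * τ⁻¹) i), h i⟫ := by
    intro f h σ τ
    rw [← Equiv.prod_comp τ (fun i => ⟪f ((σ * τ⁻¹) i), h i⟫)]
    refine Finset.prod_congr rfl fun i _ => ?_
    simp [Equiv.Perm.mul_apply]
  -- double sum over all permutations
  have sum_all : ∀ (f h : Fin n → H),
      (∑ σ : Equiv.Perm (Fin n), ∑ τ : Equiv.Perm (Fin n), ∏ i, ⟪f (σ i), h (τ i)⟫)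
        = N * ∑ ρ : Equiv.Perm (Fin n), ∏ i, ⟪f (ρ i), h i⟫ := by
    intro f h
    rw [Finset.sum_comm]
    have h1 : ∀ τ : Equiv.Perm (Fin n),
        (∑ σ : Equiv.Perm (Fin n), ∏ i, ⟪f (σ i), h (τ i)⟫)
          = ∑ ρ : Equiv.Perm (Fin n), ∏ i, ⟪f (ρ i), h i⟫ := by
      intro τ
      rw [Finset.sum_congr rfl fun σ _ => prod_reindex f h σ τ]
      exact Fintype.sum_equiv (Equiv.mulRight τ⁻¹) _ _ (fun σ => rfl)
    rw [Finset.sum_congr rfl fun τ _ => h1 τ, Finset.sum_const, Finset.card_univ,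
      Fintype.card_perm, Fintype.card_fin, nsmul_eq_mul, hNdef]
  -- double sum over the block stabilizer
  have sum_G : ∀ (f h : Fin n → H),
      (∑ σ ∈ G, ∑ τ ∈ G, ∏ i, ⟪f (σ i), h (τ i)⟫)
        = P * ∑ ρ ∈ G, ∏ i, ⟪f (ρ i), h i⟫ := by
    intro f h
    rw [Finset.sum_comm]
    have h1 : ∀ τ ∈ G, (∑ σ ∈ G, ∏ i, ⟪f (σ i), h (τ i)⟫)
        = ∑ ρ ∈ G, ∏ i, ⟪f (ρ i), h i⟫ := by
      intro τ hτ
      rw [Finset.sum_congr rfl fun σ _ => prod_reindex f h σ τ]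
      refine Finset.sum_bij' (fun σ _ => σ * τ⁻¹) (fun ρ _ => ρ * τ) ?_ ?_ ?_ ?_ ?_
      · exact fun σ hσ => hGmul σ hσ τ⁻¹ (hGinv τ hτ)
      · exact fun ρ hρ => hGmul ρ hρ τ hτ
      · intro σ _; group
      · intro ρ _; group
      · intro σ _; rfl
    rw [Finset.sum_congr rfl h1, Finset.sum_const, nsmul_eq_mul, hGcard]
  -- vanishing outside the stabilizer
  have restrict : ∀ (f h : Fin n → H), (∀ i, f i ∈ Hk (c i)) → (∀ i, h i ∈ Hk (c i)) →
      (∑ ρ : Equiv.Perm (Fin n), ∏ i, ⟪f (ρ i), h i⟫) = ∑ ρ ∈ G, ∏ i, ⟪f (ρ i), h i⟫ := by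
    intro f h hf hh
    symm
    apply Finset.sum_filter_of_ne
    intro ρ _ hne
    by_contra hρ
    push_neg at hρ
    obtain ⟨i, hi⟩ := hρ
    exact hne (Finset.prod_eq_zero (Finset.mem_univ i)
      (horth _ _ hi _ (hf (ρ i)) _ (hh i)))
  -- `Sym` identifies block-symmetrized tensors with symmetrized tensors
  have L3 : ∀ f : Fin n → H,
      Sym (P⁻¹ • ∑ σ ∈ G, tp (fun i => f (σ i))) = Sym (tp f) := by
    intro f
    rw [map_smul, map_sum]
    have h1 : ∀ σ ∈ G, Sym (tp (fun i => f (σ i))) = Sym (tp f) := by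
      intro σ _
      rw [hSym, hSym]
      congr 1
      exact Fintype.sum_equiv (Equiv.mulLeft σ) _ _ (fun τ => rfl)
    rw [Finset.sum_congr rfl h1, Finset.sum_const, ← Nat.cast_smul_eq_nsmul ℝ,
      smul_smul, hGcard, inv_mul_cancel₀ hP0.ne', one_smul]
  -- inner products of symmetrized tensors
  have L1 : ∀ (f h : Fin n → H),
      ⟪Sym (tp f), Sym (tp h)⟫
        = N⁻¹ * ∑ ρ : Equiv.Perm (Fin n), ∏ i, ⟪f (ρ i), h i⟫ := by
    intro f h
    rw [hSym f, hSym h, real_inner_smul_left, real_inner_smul_right,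
      inner_sum_sum, sum_all]
    field_simp
  -- inner products of block-symmetrized tensors
  have L2 : ∀ (f h : Fin n → H),
      ⟪(P⁻¹ • ∑ σ ∈ G, tp (fun i => f (σ i)) : T),
        P⁻¹ • ∑ σ ∈ G, tp (fun i => h (σ i))⟫
        = P⁻¹ * ∑ ρ ∈ G, ∏ i, ⟪f (ρ i), h i⟫ := by
    intro f h
    rw [real_inner_smul_left, real_inner_smul_right, inner_sum_sum, sum_G]
    field_simp
  -- generators
  set Egen : Set T := {t | ∃ f : Fin n → H, (∀ i, f i ∈ Hk (c i)) ∧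
      t = P⁻¹ • ∑ σ ∈ G, tp (fun i => f (σ i))} with hEgen
  set E : Set T := {t | ∃ f : Fin n → H, (∀ i, f i ∈ Hk (c i)) ∧ t = tp f} with hE
  set S : Submodule ℝ T := Submodule.span ℝ Egen with hS
  have hDS : D = S.topologicalClosure := hD
  have hTarS : Tar = (Submodule.span ℝ (Sym '' E)).topologicalClosure := hTar
  -- the key identity on generators
  have gen : ∀ u ∈ Egen, ∀ v ∈ Egen, ⟪Sym u, Sym v⟫ = (P / N) * ⟪u, v⟫ := by
    rintro u ⟨f, hf, rfl⟩ v ⟨h, hh, rfl⟩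
    rw [L3, L3, L1, restrict f h hf hh, L2]
    field_simp
  -- extend to the span by bilinearity
  have span_key : ∀ u ∈ S, ∀ v ∈ S, ⟪Sym u, Sym v⟫ = (P / N) * ⟪u, v⟫ := by
    intro u hu v hv
    induction hu, hv using Submodule.span_induction₂ with
    | mem_mem x y hx hy => exact gen x hx y hy
    | zero_left y hy => simp
    | zero_right x hx => simp
    | add_left x y z hx hy hz h1 h2 =>
        rw [map_add, inner_add_left, inner_add_left, h1, h2]; ring
    | add_right x y z hx hy hz h1 h2 =>
        rw [map_add, inner_add_right, inner_add_right, h1, h2]; ring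
    | smul_left r x y hx hy h1 =>
        rw [map_smul, real_inner_smul_left, real_inner_smul_left, h1]; ring
    | smul_right r x y hx hy h1 =>
        rw [map_smul, real_inner_smul_right, real_inner_smul_right, h1]; ring
  -- extend to the closure by continuity
  have key : ∀ u ∈ D, ∀ v ∈ D, ⟪Sym u, Sym v⟫ = (P / N) * ⟪u, v⟫ := by
    have hDclosure : (D : Set T) = closure (S : Set T) := by
      rw [hDS, Submodule.topologicalClosure_coe]
    have step1 : ∀ v ∈ S, ∀ u ∈ D, ⟪Sym u, Sym v⟫ = (P / N) * ⟪u, v⟫ := by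
      intro v hv u hu
      have hC : IsClosed {u : T | ⟪Sym u, Sym v⟫ = (P / N) * ⟪u, v⟫} :=
        isClosed_eq (Sym.continuous.inner continuous_const)
          (continuous_const.mul (continuous_id.inner continuous_const))
      have hsub : (S : Set T) ⊆ {u : T | ⟪Sym u, Sym v⟫ = (P / N) * ⟪u, v⟫} :=
        fun x hx => span_key x hx v hv
      have := closure_minimal hsub hC
      rw [← hDclosure] at this
      exact this hu
    intro u hu v hv
    have hC : IsClosed {w : T | ⟪Sym u, Sym w⟫ = (P / N) * ⟪u, w⟫} :=
      isClosed_eq ((continuous_const.inner Sym.continuous))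
        (continuous_const.mul (continuous_const.inner continuous_id))
    have hsub : (S : Set T) ⊆ {w : T | ⟪Sym u, Sym w⟫ = (P / N) * ⟪u, w⟫} :=
      fun w hw => step1 w hw u hu
    have := closure_minimal hsub hC
    rw [← hDclosure] at this
    exact this hv
  -- norm identity
  have norm_eq : ∀ u ∈ D, ‖Sym u‖ = Real.sqrt (P / N) * ‖u‖ := by
    intro u hu
    have h1 := key u hu u hu
    rw [real_inner_self_eq_norm_sq, real_inner_self_eq_norm_sq] at h1
    have h2 : ‖Sym u‖ = Real.sqrt (‖Sym u‖ ^ 2) := (Real.sqrt_sq (norm_nonneg _)).symm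
    rw [h2, h1, Real.sqrt_mul (by positivity), Real.sqrt_sq (norm_nonneg _)]
  have hsqrt0 : 0 < Real.sqrt (P / N) := Real.sqrt_pos.mpr (by positivity)
  -- injectivity
  have inj : Set.InjOn Sym (D : Set T) := by
    intro u hu v hv huv
    have hmem : u - v ∈ D := Submodule.sub_mem _ hu hv
    have h1 := norm_eq _ hmem
    rw [map_sub, huv, sub_self, norm_zero] at h1
    have h2 : ‖u - v‖ = 0 := by
      rcases mul_eq_zero.mp h1.symm with h | h
      · exact absurd h hsqrt0.ne'
      · exact h
    exact sub_eq_zero.mp (norm_eq_zero.mp h2)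
  have hDclosed : IsClosed (D : Set T) := by
    rw [hDS]; exact Submodule.isClosed_topologicalClosure _
  -- images of generating sets agree
  have himg : Sym '' Egen = Sym '' E := by
    ext t
    constructor
    · rintro ⟨u, ⟨f, hf, rfl⟩, rfl⟩
      exact ⟨tp f, ⟨f, hf, rfl⟩, (L3 f).symm⟩
    · rintro ⟨u, ⟨f, hf, rfl⟩, rfl⟩
      exact ⟨P⁻¹ • ∑ σ ∈ G, tp (fun i => f (σ i)), ⟨f, hf, rfl⟩, L3 f⟩
  have hmapS : Sym '' (S : Set T) = (Submodule.span ℝ (Sym '' E) : Set T) := by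
    rw [← himg, hS]
    have := Submodule.map_span (Sym : T →ₗ[ℝ] T) Egen
    calc (Sym '' (Submodule.span ℝ Egen : Set T))
        = ((Submodule.span ℝ Egen).map (Sym : T →ₗ[ℝ] T) : Set T) := rfl
      _ = (Submodule.span ℝ (Sym '' Egen) : Set T) := by rw [this]; rfl
  have hDclosure : (D : Set T) = closure (S : Set T) := by
    rw [hDS, Submodule.topologicalClosure_coe]
  have hTarclosure : (Tar : Set T) = closure (Sym '' (S : Set T)) := by
    rw [hTarS, Submodule.topologicalClosure_coe, hmapS]
  -- the image of `D` is closed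
  have himgclosed : IsClosed (Sym '' (D : Set T)) := by
    apply isClosed_of_closure_subset
    intro w hw
    obtain ⟨x, hx, hxw⟩ := mem_closure_iff_seq_limit.mp hw
    choose u hu hSu using hx
    have hwc : CauchySeq (fun k => Sym (u k)) := by
      have : (fun k => Sym (u k)) = x := funext hSu
      rw [this]; exact hxw.cauchySeq
    have huc : CauchySeq u := by
      rw [Metric.cauchySeq_iff]
      intro ε hε
      obtain ⟨K, hK⟩ := Metric.cauchySeq_iff.mp hwc (Real.sqrt (P / N) * ε)
        (by positivity)
      refine ⟨K, fun k hk l hl => ?_⟩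
      have h1 := hK k hk l hl
      rw [dist_eq_norm] at h1 ⊢
      have h2 : ‖Sym (u k) - Sym (u l)‖ = Real.sqrt (P / N) * ‖u k - u l‖ := by
        rw [← map_sub]
        exact norm_eq _ (Submodule.sub_mem _ (hu k) (hu l))
      rw [h2] at h1
      exact lt_of_mul_lt_mul_left h1 hsqrt0.le
    obtain ⟨v, hv⟩ := cauchySeq_tendsto_of_complete huc
    have hvD : v ∈ (D : Set T) :=
      hDclosed.mem_of_tendsto hv (Filter.Eventually.of_forall hu)
    refine ⟨v, hvD, ?_⟩
    have h3 : Filter.Tendsto (fun k => Sym (u k)) Filter.atTop (nhds (Sym v)) :=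
      (Sym.continuous.tendsto v).comp hv
    have h4 : Filter.Tendsto (fun k => Sym (u k)) Filter.atTop (nhds w) := by
      have : (fun k => Sym (u k)) = x := funext hSu
      rw [this]; exact hxw
    exact tendsto_nhds_unique h3 h4
  -- image equality
  have himage : Sym '' (D : Set T) = (Tar : Set T) := by
    apply Set.Subset.antisymm
    · rw [hDclosure, hTarclosure]
      exact image_closure_subset_closure_image Sym.continuous
    · rw [hTarclosure]
      apply closure_minimal _ himgclosed
      apply Set.image_mono
      rw [hDclosure]
      exact subset_closure
  exact ⟨norm_eq, inj, himage⟩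
end

section
/- Let H be a real separable Hilbert space, f_i, g_i ∈ H for i ≥ 0 with f_i, g_i in mutually orthogonal closed subspaces H_i, and let α = (α_0, α_1, ...) be a multi-index with |α| = n. Then ⟨Sym_n(f_0^{⊗α_0} ⊗ f_1^{⊗α_1} ⊗ ···), Sym_n(g_0^{⊗α_0} ⊗ g_1^{⊗α_1} ⊗ ···)⟩_{H^{⊗n}} = (1/n!) Π_{i≥0} α_i! ⟨f_i, g_i⟩^{α_i}. -/
open scoped RealInnerProductSpace BigOperators
open Finset

/-- for vectors `f_i, g_i` in mutually orthogonal closed subspaces `H_i` and a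
multi-index `α` with `|α| = n`,
`⟪Sym_n(f_0^{⊗α_0} ⊗ f_1^{⊗α_1} ⊗ ⋯), Sym_n(g_0^{⊗α_0} ⊗ g_1^{⊗α_1} ⊗ ⋯)⟫
  = (1/n!) Π_i α_i! ⟪f_i, g_i⟫^{α_i}`. -/
theorem statement6
    {H T : Type*} [NormedAddCommGroup H] [InnerProductSpace ℝ H]
    [CompleteSpace H] [TopologicalSpace.SeparableSpace H]
    [NormedAddCommGroup T] [InnerProductSpace ℝ T] [CompleteSpace T]
    (Hk : ℕ → Submodule ℝ H)
    (hclosed : ∀ j, IsClosed (Hk j : Set H))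
    (horth : ∀ j j', j ≠ j' → ∀ x ∈ Hk j, ∀ y ∈ Hk j', ⟪x, y⟫ = 0)
    (n : ℕ)
    (tp : (Fin n → H) → T)
    (htp : ∀ f g : Fin n → H, ⟪tp f, tp g⟫ = ∏ i, ⟪f i, g i⟫)
    (Sym : T →L[ℝ] T)
    (hSym : ∀ f : Fin n → H,
      Sym (tp f) = ((n.factorial : ℝ))⁻¹ • ∑ σ : Equiv.Perm (Fin n), tp (fun i => f (σ i)))
    (α : ℕ →₀ ℕ) (hα : (α.sum fun _ m => m) = n)
    -- a block structure realizing the multiplicities α (so that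
    -- `fun i => f (c i)` is the tensor `f_0^{⊗α_0} ⊗ f_1^{⊗α_1} ⊗ ⋯`)
    (c : Fin n → ℕ)
    (hc : ∀ j, (Finset.univ.filter fun i => c i = j).card = α j)
    (f g : ℕ → H)
    (hf : ∀ j, f j ∈ Hk j) (hg : ∀ j, g j ∈ Hk j) :
    ⟪Sym (tp (fun i => f (c i))), Sym (tp (fun i => g (c i)))⟫
      = ((n.factorial : ℝ))⁻¹ *
          ∏ j ∈ α.support, (((α j).factorial : ℝ) * ⟪f j, g j⟫ ^ (α j)) := by
  classical
  -- the diagonal product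
  set P : ℝ := ∏ i, ⟪f (c i), g (c i)⟫ with hP
  -- key pointwise computation
  have key : ∀ σ τ : Equiv.Perm (Fin n),
      (∏ i, ⟪f (c (σ i)), g (c (τ i))⟫) =
        if ∀ i, c (σ i) = c (τ i) then P else 0 := by
    intro σ τ
    split_ifs with h
    · calc (∏ i, ⟪f (c (σ i)), g (c (τ i))⟫)
          = ∏ i, ⟪f (c (σ i)), g (c (σ i))⟫ :=
            Finset.prod_congr rfl fun i _ => by rw [h i]
        _ = P := Equiv.prod_comp σ fun i => ⟪f (c i), g (c i)⟫
    · push_neg at h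
      obtain ⟨i, hi⟩ := h
      exact Finset.prod_eq_zero (Finset.mem_univ i)
        (horth _ _ hi _ (hf _) _ (hg _))
  -- the number of fiber-preserving permutations
  set N : ℕ := Fintype.card {π : Equiv.Perm (Fin n) // c ∘ π = c} with hN
  have hcard : ∀ σ : Equiv.Perm (Fin n),
      (Finset.univ.filter fun τ : Equiv.Perm (Fin n) => ∀ i, c (σ i) = c (τ i)).card = N := by
    intro σ
    rw [hN, ← Fintype.card_subtype]
    refine Fintype.card_congr (Equiv.subtypeEquiv (Equiv.mulRight σ⁻¹) fun τ => ?_)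
    constructor
    · intro h
      funext i
      have := h (σ⁻¹ i)
      simpa using this.symm
    · intro h i
      have := congrFun h (σ i)
      simpa using this.symm
  -- inner sum
  have hsum : ∀ σ : Equiv.Perm (Fin n),
      (∑ τ : Equiv.Perm (Fin n), ∏ i, ⟪f (c (σ i)), g (c (τ i))⟫) = (N : ℝ) * P := by
    intro σ
    simp only [key σ]
    rw [Finset.sum_ite, Finset.sum_const, Finset.sum_const_zero, add_zero, hcard σ,
      nsmul_eq_mul]
  -- identify the image of c with the support of α
  have himg : Finset.univ.image c = α.support := by
    ext j
    rw [Finsupp.mem_support_iff, ← hc j, Ne, Finset.card_eq_zero, ← Ne,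
      ← Finset.nonempty_iff_ne_empty, Finset.filter_nonempty_iff]
    simp
  have hfib : ∀ j, Fintype.card {i : Fin n // c i = j} = α j := by
    intro j
    rw [Fintype.card_subtype, hc j]
  -- count N
  have hNval : N = ∏ j ∈ α.support, (α j).factorial := by
    rw [hN, DomMulAct.stabilizer_card', himg]
    exact Finset.prod_congr rfl fun j _ => by rw [hfib j]
  -- group P by fibers
  have hPval : P = ∏ j ∈ α.support, ⟪f j, g j⟫ ^ (α j) := by
    rw [hP, ← Finset.prod_fiberwise_of_maps_to (t := α.support) (g := c)
      (fun i _ => by rw [← himg]; exact Finset.mem_image_of_mem c (Finset.mem_univ i))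
      (fun i => (⟪f (c i), g (c i)⟫ : ℝ))]
    refine Finset.prod_congr rfl fun j _ => ?_
    calc (∏ i ∈ Finset.univ.filter fun i => c i = j, ⟪f (c i), g (c i)⟫)
        = ∏ i ∈ Finset.univ.filter fun i => c i = j, ⟪f j, g j⟫ := by
          refine Finset.prod_congr rfl fun i hi => ?_
          rw [(Finset.mem_filter.mp hi).2]
      _ = ⟪f j, g j⟫ ^ (α j) := by rw [Finset.prod_const, hc j]
  -- main computation
  rw [hSym, hSym, real_inner_smul_left, real_inner_smul_right, sum_inner]
  simp only [inner_sum, htp]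
  rw [Finset.sum_congr rfl fun σ _ => hsum σ, Finset.sum_const, Finset.card_univ,
    Fintype.card_perm, nsmul_eq_mul, hNval, hPval]
  rw [Finset.prod_mul_distrib]
  have hfac : ((n.factorial : ℝ)) ≠ 0 := Nat.cast_ne_zero.mpr n.factorial_ne_zero
  push_cast
  field_simp
  rw [Fintype.card_fin]
end
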